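/- The degree $\delta(m,e)$ of the tetrahedron index $I_\Delta(m,e)(q)$ (the smallest half-integer power of $q$ appearing with nonzero coefficient) is given by $\delta(m,e) = \frac{1}{2}\left( m_+ (m+e)_+ + (-m)_+ e_+ + (-e)_+ (-e-m)_+ + \max\{0, m, -e\} \right)$, where $x_+ = \max\{0,x\}$. -/

import Mathlib

/- We work with the formal variable `t = q^(1/2)`, so that `q = t^2` and
elements of `ℤ((q^(1/2)))` are described by their coefficient functions `ℤ → ℤ`
(coefficient of `t^k`).  The `q`-Pochhammer symbol `(q)_n = ∏_{i=1}^n (1-q^i)`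
is a power series in `t` with constant term `1`, hence invertible. -/

/-- `(q)_n = ∏_{i=1}^n (1 - q^i)` as a power series in `t` with `q = t^2`. -/
noncomputable def qPoch (n : ℕ) : PowerSeries ℤ :=
  ∏ i ∈ Finset.range n, (1 - (PowerSeries.X : PowerSeries ℤ) ^ (2 * (i + 1)))

/-- The inverse `1/(q)_n` (the constant term of `(q)_n` is `1`). -/
noncomputable def qPochInv (n : ℕ) : PowerSeries ℤ :=
  PowerSeries.invOfUnit (qPoch n) 1

/-- Coefficient of `t^k` in a power series in `t` (zero for negative `k`). -/
noncomputable def coeffZ (k : ℤ) (f : PowerSeries ℤ) : ℤ :=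
  if 0 ≤ k then PowerSeries.coeff k.toNat f else 0

/-- Coefficient of `t^k` in the summand
`S(m,e,n) = (-1)^n q^{n(n+1)/2 - (n+e/2)m} / ((q)_n (q)_{n+e})`
of the tetrahedron index, with the convention `1/(q)_n = 0` for `n < 0`.
(In `t`-units the exponent is `n(n+1) - (2n+e)m`.) -/
noncomputable def Scoeff (m e : ℤ) (n : ℕ) (k : ℤ) : ℤ :=
  if 0 ≤ (n : ℤ) + e then
    (-1) ^ n *
      coeffZ (k - ((n : ℤ) * (n + 1) - (2 * n + e) * m))
        (qPochInv n * qPochInv ((n : ℤ) + e).toNat)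
  else 0

/-- Coefficient of `t^k` in the tetrahedron index `I_Δ(m,e)`; for fixed `k`
only finitely many `n` contribute, so the `finsum` is the honest sum. -/
noncomputable def Icoeff (m e : ℤ) (k : ℤ) : ℤ :=
  ∑ᶠ n : ℕ, Scoeff m e n k

/-- `I_Δ(m,e)` has degree `d` (in `t = q^{1/2}`-units, i.e. `q`-degree `d/2`):
the coefficient of `t^d` is nonzero and all lower coefficients vanish. -/
def HasDegree (m e d : ℤ) : Prop :=
  Icoeff m e d ≠ 0 ∧ ∀ k < d, Icoeff m e k = 0


open PowerSeries Finset

lemma constantCoeff_qPoch (n : ℕ) : constantCoeff (qPoch n) = 1 := by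
  unfold qPoch
  rw [map_prod]
  apply Finset.prod_eq_one
  intro i _
  simp

lemma qPoch_mul_qPochInv (n : ℕ) : qPoch n * qPochInv n = 1 :=
  PowerSeries.mul_invOfUnit _ _ (by simp [constantCoeff_qPoch])

lemma qPoch_ne_zero (n : ℕ) : qPoch n ≠ 0 := by
  intro h
  have := qPoch_mul_qPochInv n
  rw [h, zero_mul] at this
  exact one_ne_zero this.symm

lemma qPochInv_zero : qPochInv 0 = 1 := by
  have h := qPoch_mul_qPochInv 0
  have h0 : qPoch 0 = 1 := by simp [qPoch]
  rwa [h0, one_mul] at h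

lemma qPoch_succ (n : ℕ) : qPoch (n + 1) = qPoch n * (1 - (PowerSeries.X : PowerSeries ℤ) ^ (2 * (n + 1))) := by
  unfold qPoch
  rw [Finset.prod_range_succ]

lemma qPochInv_succ (n : ℕ) :
    qPochInv n = qPochInv (n + 1) * (1 - (PowerSeries.X : PowerSeries ℤ) ^ (2 * (n + 1))) := by
  apply mul_left_cancel₀ (qPoch_ne_zero n)
  rw [qPoch_mul_qPochInv]
  symm
  calc qPoch n * (qPochInv (n + 1) * (1 - (PowerSeries.X : PowerSeries ℤ) ^ (2 * (n + 1))))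
      = (qPoch n * (1 - (PowerSeries.X : PowerSeries ℤ) ^ (2 * (n + 1)))) * qPochInv (n+1) := by ring
    _ = qPoch (n+1) * qPochInv (n+1) := by rw [qPoch_succ]
    _ = 1 := qPoch_mul_qPochInv _

lemma constantCoeff_qPochInv (n : ℕ) : constantCoeff (qPochInv n) = 1 := by
  have h := congrArg (constantCoeff) (qPoch_mul_qPochInv n)
  rw [map_mul, constantCoeff_qPoch, one_mul, map_one] at h
  exact h

-- coeffZ lemmas
lemma coeffZ_neg {k : ℤ} (h : k < 0) (f : PowerSeries ℤ) : coeffZ k f = 0 := by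
  simp [coeffZ, not_le.2 h]

lemma coeffZ_ofNat (k : ℕ) (f : PowerSeries ℤ) : coeffZ (k : ℤ) f = PowerSeries.coeff k f := by
  simp [coeffZ]

lemma coeffZ_sub (k : ℤ) (f g : PowerSeries ℤ) : coeffZ k (f - g) = coeffZ k f - coeffZ k g := by
  unfold coeffZ
  split <;> simp

lemma coeffZ_zero_series (k : ℤ) : coeffZ k (0 : PowerSeries ℤ) = 0 := by
  unfold coeffZ; split <;> simp

lemma coeffZ_X_pow_mul (k : ℤ) (a : ℕ) (f : PowerSeries ℤ) :
    coeffZ k ((PowerSeries.X : PowerSeries ℤ) ^ a * f) = coeffZ (k - a) f := by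
  unfold coeffZ
  rw [PowerSeries.coeff_X_pow_mul']
  split_ifs with h1 h2 h3
  · have hx : k.toNat - a = (k - (a:ℤ)).toNat := by omega
    rw [hx]
  · exfalso; omega
  · exfalso; omega
  · rfl
  · exfalso; omega
  · rfl

lemma coeffZ_one_sub_X_pow_mul (k : ℤ) (a : ℕ) (f : PowerSeries ℤ) :
    coeffZ k ((1 - (PowerSeries.X : PowerSeries ℤ) ^ a) * f) = coeffZ k f - coeffZ (k - a) f := by
  rw [sub_mul, one_mul, coeffZ_sub, coeffZ_X_pow_mul]

lemma coeffZ_one (k : ℤ) : coeffZ k (1 : PowerSeries ℤ) = if k = 0 then 1 else 0 := by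
  unfold coeffZ
  by_cases hk : 0 ≤ k
  · rw [if_pos hk, PowerSeries.coeff_one]
    by_cases h0 : k = 0 <;> simp [h0]
    omega
  · rw [if_neg hk, if_neg (by omega)]


-- W section
noncomputable def wSeries : PowerSeries ℤ :=
  PowerSeries.mk fun K => PowerSeries.coeff K (qPoch K)

lemma qPoch_add (c r : ℕ) :
    qPoch (c + r) = qPoch c * ∏ i ∈ Finset.range r,
      (1 - (PowerSeries.X : PowerSeries ℤ) ^ (2 * (c + i + 1))) := by
  unfold qPoch
  rw [Finset.prod_range_add]

lemma tail_trunc (c r K : ℕ) (h : K ≤ 2 * c + 1) :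
    PowerSeries.coeff K (∏ i ∈ Finset.range r,
      (1 - (PowerSeries.X : PowerSeries ℤ) ^ (2 * (c + i + 1)))) = if K = 0 then 1 else 0 := by
  induction r with
  | zero => simp [PowerSeries.coeff_one]
  | succ r ih =>
    rw [Finset.prod_range_succ, mul_sub, mul_one, map_sub, ih]
    have hz : PowerSeries.coeff K ((∏ i ∈ Finset.range r,
        (1 - (PowerSeries.X : PowerSeries ℤ) ^ (2 * (c + i + 1)))) * PowerSeries.X ^ (2 * (c + r + 1))) = 0 := by
      rw [PowerSeries.coeff_mul_X_pow', if_neg (by omega)]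
    rw [hz, sub_zero]

lemma mul_one_trunc (u v : PowerSeries ℤ) (K : ℕ)
    (h : ∀ j ≤ K, PowerSeries.coeff j v = if j = 0 then 1 else 0) :
    PowerSeries.coeff K (u * v) = PowerSeries.coeff K u := by
  rw [PowerSeries.coeff_mul]
  rw [Finset.sum_eq_single_of_mem (K, 0) (Finset.HasAntidiagonal.mem_antidiagonal.2 (by simp))]
  · rw [h 0 (by omega), if_pos rfl, mul_one]
  · rintro ⟨i, j⟩ hmem hne
    have hij : i + j = K := Finset.HasAntidiagonal.mem_antidiagonal.1 hmem
    have hj : j ≠ 0 := by rintro rfl; exact hne (by simp [← hij])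
    rw [h j (by omega), if_neg hj, mul_zero]

lemma qPoch_trunc {M M' K : ℕ} (hMM : M ≤ M') (h : K ≤ 2 * M + 1) :
    PowerSeries.coeff K (qPoch M') = PowerSeries.coeff K (qPoch M) := by
  obtain ⟨r, rfl⟩ := Nat.exists_eq_add_of_le hMM
  rw [qPoch_add, mul_one_trunc]
  intro j hj
  exact tail_trunc M r j (le_trans hj h)

lemma wSeries_coeff {M K : ℕ} (h : K ≤ 2 * M + 1) :
    PowerSeries.coeff K wSeries = PowerSeries.coeff K (qPoch M) := by
  unfold wSeries
  rw [PowerSeries.coeff_mk]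
  rcases le_total K M with hKM | hMK
  · exact (qPoch_trunc hKM (by omega)).symm
  · exact qPoch_trunc hMK h

lemma constantCoeff_wSeries : PowerSeries.constantCoeff wSeries = 1 := by
  have h := wSeries_coeff (M := 0) (K := 0) (by omega)
  simp only [qPoch] at h
  rw [PowerSeries.coeff_zero_eq_constantCoeff] at h
  simpa using h

noncomputable def wInv : PowerSeries ℤ := PowerSeries.invOfUnit wSeries 1

lemma wSeries_mul_wInv : wSeries * wInv = 1 :=
  PowerSeries.mul_invOfUnit _ _ (by simp [constantCoeff_wSeries])

lemma coeff_mul_left_trunc (a b f : PowerSeries ℤ) (K : ℕ)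
    (h : ∀ i ≤ K, PowerSeries.coeff i a = PowerSeries.coeff i b) :
    PowerSeries.coeff K (a * f) = PowerSeries.coeff K (b * f) := by
  rw [PowerSeries.coeff_mul, PowerSeries.coeff_mul]
  apply Finset.sum_congr rfl
  rintro ⟨i, j⟩ hmem
  have hij : i + j = K := Finset.HasAntidiagonal.mem_antidiagonal.1 hmem
  rw [h i (by omega)]

lemma W_qPochInv_trunc (c K : ℕ) (h : K ≤ 2 * c + 1) :
    PowerSeries.coeff K (wSeries * qPochInv c) = if K = 0 then 1 else 0 := by
  have h1 : PowerSeries.coeff K (wSeries * qPochInv c)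
      = PowerSeries.coeff K (qPoch (c + K) * qPochInv c) := by
    apply coeff_mul_left_trunc
    intro i hi
    exact wSeries_coeff (by omega)
  rw [h1, qPoch_add]
  have h2 : qPoch c * (∏ i ∈ Finset.range K, (1 - (PowerSeries.X : PowerSeries ℤ) ^ (2 * (c + i + 1)))) * qPochInv c
      = (∏ i ∈ Finset.range K, (1 - (PowerSeries.X : PowerSeries ℤ) ^ (2 * (c + i + 1)))) * (qPoch c * qPochInv c) := by ring
  rw [h2, qPoch_mul_qPochInv, mul_one]
  exact tail_trunc c K K h

-- Euler section
noncomputable def qPochInvZ (N : ℤ) : PowerSeries ℤ := if 0 ≤ N then qPochInv N.toNat else 0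

def eulerE (c : ℤ) (j : ℕ) : ℤ := (j : ℤ) * (j - 1) + 2 * c * j

noncomputable def ScU (u : PowerSeries ℤ) (c k : ℤ) : ℤ :=
  ∑ᶠ j : ℕ, (-1) ^ j * coeffZ (k - eulerE c j) (u * qPochInv j)

lemma finsum_nat_eq_sum (h : ℕ → ℤ) (B : ℕ) (hB : ∀ j, B ≤ j → h j = 0) :
    ∑ᶠ j, h j = ∑ j ∈ Finset.range B, h j := by
  apply finsum_eq_sum_of_support_subset
  intro x hx
  simp only [Finset.coe_range, Set.mem_Iio]
  by_contra hc
  exact hx (hB x (by omega))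

lemma eulerE_big {c k : ℤ} {j : ℕ} (hj : 2 * c.natAbs + k.natAbs + 2 ≤ j) :
    k - eulerE c j < 0 := by
  have h1 : (2 * (c.natAbs : ℤ) + (k.natAbs : ℤ) + 2) ≤ (j : ℤ) := by exact_mod_cast hj
  have h2 : (1 : ℤ) ≤ (j : ℤ) - 1 + 2 * c := by omega
  have h0 : (0 : ℤ) ≤ (j : ℤ) := by positivity
  have h3 : (j : ℤ) * 1 ≤ (j : ℤ) * ((j : ℤ) - 1 + 2 * c) := by
    apply mul_le_mul_of_nonneg_left h2 h0
  have h4 : eulerE c j = (j : ℤ) * ((j : ℤ) - 1 + 2 * c) := by unfold eulerE; ring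
  have hk : k ≤ (k.natAbs : ℤ) := Int.le_natAbs
  rw [h4]
  omega

lemma eulerE_succ_c (c : ℤ) (j : ℕ) : eulerE (c + 1) j = eulerE c j + 2 * j := by
  unfold eulerE; ring

lemma eulerE_succ_j (c : ℤ) (i : ℕ) : eulerE c (i + 1) = eulerE (c + 1) i + 2 * c := by
  unfold eulerE; push_cast; ring

lemma ScU_eq_sum (u : PowerSeries ℤ) (c k : ℤ) (B : ℕ)
    (hB : 2 * c.natAbs + k.natAbs + 2 ≤ B) :
    ScU u c k = ∑ j ∈ Finset.range B, (-1) ^ j * coeffZ (k - eulerE c j) (u * qPochInv j) := by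
  apply finsum_nat_eq_sum
  intro j hj
  rw [coeffZ_neg (eulerE_big (by omega)), mul_zero]

lemma ScU_rec (u : PowerSeries ℤ) (c k : ℤ) :
    ScU u c k = ScU u (c + 1) k - ScU u (c + 1) (k - 2 * c) := by
  set B : ℕ := 2 * c.natAbs + 2 * (c + 1).natAbs + k.natAbs + (k - 2 * c).natAbs + 4 with hBdef
  have e1 := ScU_eq_sum u c k (B + 1) (by omega)
  have e2 := ScU_eq_sum u (c + 1) k (B + 1) (by omega)
  have e3 := ScU_eq_sum u (c + 1) (k - 2 * c) B (by omega)
  have key : ScU u c k - ScU u (c + 1) k = -ScU u (c + 1) (k - 2 * c) := by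
    rw [e1, e2, e3, ← Finset.sum_sub_distrib]
    have step1 : ∀ j ∈ Finset.range (B + 1),
        (-1) ^ j * coeffZ (k - eulerE c j) (u * qPochInv j)
          - (-1) ^ j * coeffZ (k - eulerE (c + 1) j) (u * qPochInv j)
        = (-1) ^ j * coeffZ (k - eulerE c j)
            ((1 - (PowerSeries.X : PowerSeries ℤ) ^ (2 * j)) * (u * qPochInv j)) := by
      intro j _
      rw [coeffZ_one_sub_X_pow_mul]
      rw [eulerE_succ_c]
      push_cast
      ring_nf
    rw [Finset.sum_congr rfl step1]
    rw [Finset.sum_range_succ']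
    have h0 : (-1 : ℤ) ^ (0 : ℕ) * coeffZ (k - eulerE c 0)
        ((1 - (PowerSeries.X : PowerSeries ℤ) ^ (2 * 0)) * (u * qPochInv 0)) = 0 := by
      norm_num [coeffZ_zero_series]
    rw [h0, add_zero]
    rw [← Finset.sum_neg_distrib]
    apply Finset.sum_congr rfl
    intro i _
    have hser : (1 - (PowerSeries.X : PowerSeries ℤ) ^ (2 * (i + 1))) * (u * qPochInv (i + 1))
        = u * qPochInv i := by
      rw [qPochInv_succ i]; ring
    rw [hser]
    have hexp : k - eulerE c (i + 1) = (k - 2 * c) - eulerE (c + 1) i := by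
      rw [eulerE_succ_j]; ring
    rw [hexp, pow_succ]
    ring
  linarith [key]

lemma ScU_zero (u : PowerSeries ℤ) (k : ℤ) : ScU u 0 k = 0 := by
  have h := ScU_rec u 0 k
  norm_num at h
  omega

lemma ScU_neg_nat (u : PowerSeries ℤ) : ∀ d : ℕ, ∀ k, ScU u (-(d : ℤ)) k = 0 := by
  intro d
  induction d with
  | zero => intro k; norm_num [ScU_zero]
  | succ d ih =>
    intro k
    have h := ScU_rec u (-((d : ℤ) + 1)) k
    have h1 : -((d : ℤ) + 1) + 1 = -(d : ℤ) := by ring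
    rw [h1] at h
    rw [ih k, ih (k - 2 * -((d : ℤ) + 1))] at h
    push_cast
    omega

lemma ScU_c_nonpos (u : PowerSeries ℤ) {c : ℤ} (hc : c ≤ 0) (k : ℤ) : ScU u c k = 0 := by
  have h : c = -(((-c).toNat : ℤ)) := by omega
  rw [h]
  exact ScU_neg_nat u _ k

lemma ScU_base (u : PowerSeries ℤ) (c : ℤ) (hc : 1 ≤ c) (k : ℤ) (hk : k < 2 * c) :
    ScU u c k = coeffZ k u := by
  unfold ScU
  rw [finsum_eq_single _ 0]
  · have h0 : eulerE c 0 = 0 := by unfold eulerE; simp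
    rw [h0, qPochInv_zero, mul_one, sub_zero, pow_zero, one_mul]
  · intro j hj
    have hj1 : 1 ≤ j := Nat.one_le_iff_ne_zero.2 hj
    have hbig : k - eulerE c j < 0 := by
      have h1 : (1 : ℤ) ≤ (j : ℤ) := by exact_mod_cast hj1
      have h2 : 2 * c ≤ 2 * c * j := by nlinarith
      have h3 : (0 : ℤ) ≤ (j : ℤ) * ((j : ℤ) - 1) := by nlinarith
      unfold eulerE
      omega
    rw [coeffZ_neg hbig, mul_zero]

lemma LAbase (u : PowerSeries ℤ) (c : ℕ) (k : ℤ) (hk : k < 2 * (c : ℤ) + 2) :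
    coeffZ k (u * (wSeries * qPochInv c)) = coeffZ k u := by
  by_cases h0 : 0 ≤ k
  · unfold coeffZ
    rw [if_pos h0, if_pos h0]
    apply mul_one_trunc
    intro j hj
    apply W_qPochInv_trunc
    omega
  · rw [coeffZ_neg (by omega), coeffZ_neg (by omega)]

lemma LAd (u : PowerSeries ℤ) :
    ∀ (d c : ℕ) (k : ℤ), k < 2 * (c : ℤ) + 2 + 2 * d →
      ScU u ((c : ℤ) + 1) k = coeffZ k (u * (wSeries * qPochInv c)) := by
  intro d
  induction d with
  | zero =>
    intro c k hk
    rw [LAbase u c k (by omega)]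
    exact ScU_base u ((c : ℤ) + 1) (by omega) k (by omega)
  | succ d ih =>
    intro c k hk
    by_cases h : k < 2 * (c : ℤ) + 2 + 2 * d
    · exact ih c k h
    · have hrec := ScU_rec u ((c : ℤ) + 1) k
      have hc1 : ((c : ℤ) + 1 + 1) = ((c + 1 : ℕ) : ℤ) + 1 := by push_cast; ring
      rw [hc1] at hrec
      rw [hrec, ih (c + 1) k (by push_cast; omega),
        ih (c + 1) (k - 2 * ((c : ℤ) + 1)) (by push_cast; omega)]
      have harg : k - 2 * ((c : ℤ) + 1) = k - (2 * (c + 1) : ℕ) := by push_cast; ring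
      rw [harg, ← coeffZ_one_sub_X_pow_mul]
      congr 1
      rw [qPochInv_succ c]
      ring

lemma LAfull (u : PowerSeries ℤ) (N : ℤ) (k : ℤ) :
    coeffZ k (u * (wSeries * qPochInvZ N)) = ScU u (N + 1) k := by
  unfold qPochInvZ
  by_cases hN : 0 ≤ N
  · rw [if_pos hN]
    have h := LAd u (k.toNat + 1) N.toNat k (by omega)
    rw [show ((N.toNat : ℤ) + 1) = N + 1 by omega] at h
    exact h.symm
  · rw [if_neg hN, mul_zero, mul_zero, coeffZ_zero_series]
    exact (ScU_c_nonpos u (by omega) k).symm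

-- assembly definitions
def fE (m e : ℤ) (n : ℕ) : ℤ := (n : ℤ) * (n + 1) - (2 * n + e) * m

def gE (m e : ℤ) (n j : ℕ) : ℤ :=
  ((n : ℤ) + j) * ((n : ℤ) + j + 1) - 2 * m * n + 2 * e * j - e * m

def T0 (m e : ℤ) : ℤ := -(m ^ 2) - e ^ 2 - e * m

noncomputable def PA (m e : ℤ) : PowerSeries ℤ :=
  PowerSeries.mk fun i => Icoeff m e ((i : ℤ) + T0 m e)

noncomputable def Dterm (m e : ℤ) (n j : ℕ) (x : ℤ) : ℤ :=
  (-1) ^ (n + j) * coeffZ (x - gE m e n j) (qPochInv n * qPochInv j)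

lemma Scoeff_eq (m e : ℤ) (n : ℕ) (k : ℤ) :
    Scoeff m e n k = (-1) ^ n * coeffZ (k - fE m e n) (qPochInv n * qPochInvZ ((n : ℤ) + e)) := by
  unfold Scoeff qPochInvZ fE
  split_ifs with h
  · rfl
  · rw [mul_zero, coeffZ_zero_series, mul_zero]

lemma fE_lower (m e : ℤ) (n : ℕ) : -(m ^ 2) - e * m ≤ fE m e n := by
  unfold fE
  have h0 : (0 : ℤ) ≤ (n : ℤ) := by positivity
  nlinarith [sq_nonneg ((n : ℤ) - m)]

lemma T0_le_fE (m e : ℤ) (n : ℕ) : T0 m e ≤ fE m e n := by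
  have h := fE_lower m e n
  have h2 : (0 : ℤ) ≤ e ^ 2 := sq_nonneg e
  unfold T0
  omega

lemma Scoeff_vanish_low {m e : ℤ} {n : ℕ} {k : ℤ} (h : k < fE m e n) : Scoeff m e n k = 0 := by
  rw [Scoeff_eq, coeffZ_neg (by omega), mul_zero]

lemma fE_big (m e k : ℤ) {n : ℕ} (h : 2 * m.natAbs + (k + e * m).natAbs + 1 ≤ (n : ℤ)) :
    k < fE m e n := by
  have ha : (m.natAbs : ℤ) = |m| := Int.abs_eq_natAbs m |>.symm
  have hb : ((k + e * m).natAbs : ℤ) = |k + e * m| := Int.abs_eq_natAbs _ |>.symm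
  have h1 : (1 : ℤ) ≤ (n : ℤ) + 1 - 2 * m := by
    have := le_abs_self m; have := neg_abs_le m; omega
  have h0 : (0 : ℤ) ≤ (n : ℤ) := by positivity
  have h3 : (n : ℤ) * 1 ≤ (n : ℤ) * ((n : ℤ) + 1 - 2 * m) :=
    mul_le_mul_of_nonneg_left h1 h0
  have h4 : fE m e n = (n : ℤ) * ((n : ℤ) + 1 - 2 * m) - e * m := by unfold fE; ring
  have h5 : k + e * m ≤ |k + e * m| := le_abs_self _
  have := abs_nonneg m
  omega

lemma Icoeff_eq_sum (m e k : ℤ) (B : ℕ)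
    (hB : 2 * m.natAbs + (k + e * m).natAbs + 1 ≤ (B : ℤ)) :
    Icoeff m e k = ∑ n ∈ Finset.range B, Scoeff m e n k := by
  apply finsum_nat_eq_sum
  intro n hn
  apply Scoeff_vanish_low
  apply fE_big
  have : (B : ℤ) ≤ (n : ℤ) := by exact_mod_cast hn
  omega

lemma Icoeff_vanish_low (m e k : ℤ) (h : k < -(m ^ 2) - e * m) : Icoeff m e k = 0 := by
  apply finsum_eq_zero_of_forall_eq_zero
  intro n
  exact Scoeff_vanish_low (lt_of_lt_of_le h (fE_lower m e n))

lemma fE_plus_eulerE (m e : ℤ) (n j : ℕ) :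
    fE m e n + eulerE ((n : ℤ) + e + 1) j = gE m e n j := by
  unfold fE eulerE gE
  ring

lemma Lconv (f g : PowerSeries ℤ) (K : ℕ) (s : ℤ) (hs : s ≤ 0) :
    ∑ p ∈ Finset.HasAntidiagonal.antidiagonal K, coeffZ ((p.1 : ℤ) + s) f * PowerSeries.coeff p.2 g
      = coeffZ ((K : ℤ) + s) (f * g) := by
  rw [Finset.Nat.sum_antidiagonal_eq_sum_range_succ_mk]
  by_cases hKs : (K : ℤ) + s < 0
  · rw [coeffZ_neg hKs]
    apply Finset.sum_eq_zero
    intro i hi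
    have hiK : i ≤ K := by
      have := Finset.mem_range.1 hi; omega
    rw [coeffZ_neg (by
      have : (i : ℤ) ≤ (K : ℤ) := by exact_mod_cast hiK
      omega), zero_mul]
  · push_neg at hKs
    set d : ℕ := (-s).toNat with hd
    have hds : (d : ℤ) = -s := by omega
    have hdK : d ≤ K := by omega
    have hL : (K : ℤ) + s = ((K - d : ℕ) : ℤ) := by omega
    rw [hL, coeffZ_ofNat, PowerSeries.coeff_mul,
      Finset.Nat.sum_antidiagonal_eq_sum_range_succ_mk]
    have hsplit : ∑ i ∈ Finset.range (K + 1), coeffZ ((i : ℤ) + s) f * PowerSeries.coeff (K - i) g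
        = ∑ i ∈ Finset.Ico d (K + 1), coeffZ ((i : ℤ) + s) f * PowerSeries.coeff (K - i) g := by
      rw [Finset.range_eq_Ico, ← Finset.sum_Ico_consecutive _ (Nat.zero_le d) (by omega)]
      have hz : ∑ i ∈ Finset.Ico 0 d, coeffZ ((i : ℤ) + s) f * PowerSeries.coeff (K - i) g = 0 := by
        apply Finset.sum_eq_zero
        intro i hi
        have hid : i < d := (Finset.mem_Ico.1 hi).2
        rw [coeffZ_neg (by
          have : (i : ℤ) < (d : ℤ) := by exact_mod_cast hid
          omega), zero_mul]
      rw [hz, zero_add]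
    rw [hsplit, Finset.sum_Ico_eq_sum_range]
    have hrange : K + 1 - d = K - d + 1 := by omega
    rw [hrange]
    apply Finset.sum_congr rfl
    intro i hi
    have h1 : ((d + i : ℕ) : ℤ) + s = ((i : ℕ) : ℤ) := by push_cast; omega
    have h2 : K - (d + i) = K - d - i := by omega
    rw [h1, coeffZ_ofNat, h2]

lemma gE_big (m e x : ℤ) {n j : ℕ}
    (h : 2 * ((m.natAbs : ℤ) + e.natAbs) + (x + e * m).natAbs + 1 ≤ (n : ℤ) + j) :
    x < gE m e n j := by
  set a : ℤ := (m.natAbs : ℤ) with hadef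
  set b : ℤ := (e.natAbs : ℤ) with hbdef
  set s : ℤ := (n : ℤ) + j with hsdef
  have han : (0:ℤ) ≤ (n:ℤ) := by positivity
  have haj : (0:ℤ) ≤ (j:ℤ) := by positivity
  have ham1 : m ≤ a := by have := le_abs_self m; have := (Int.abs_eq_natAbs m); omega
  have ham2 : -a ≤ m := by have := neg_abs_le m; have := (Int.abs_eq_natAbs m); omega
  have hbe1 : e ≤ b := by have := le_abs_self e; have := (Int.abs_eq_natAbs e); omega
  have hbe2 : -b ≤ e := by have := neg_abs_le e; have := (Int.abs_eq_natAbs e); omega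
  have hx : x + e * m ≤ ((x + e * m).natAbs : ℤ) := Int.le_natAbs
  have hs0 : 0 ≤ s := by omega
  have hkey : s * (s + 1 - 2 * a - 2 * b) ≥ s * 1 := by
    apply mul_le_mul_of_nonneg_left _ hs0
    omega
  have hgE : gE m e n j = s * (s + 1) - 2 * m * n + 2 * e * j - e * m := by
    unfold gE; rw [hsdef]
  have p1 : 0 ≤ (a - m) * (n : ℤ) := mul_nonneg (by omega) han
  have p2 : 0 ≤ (b + e) * (j : ℤ) := mul_nonneg (by omega) haj
  have p3 : 0 ≤ a * (j : ℤ) := mul_nonneg (by omega) haj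
  have p4 : 0 ≤ b * (n : ℤ) := mul_nonneg (by omega) han
  nlinarith [hkey, p1, p2, p3, p4]

lemma Dterm_vanish (m e x : ℤ) {n j : ℕ}
    (h : 2 * ((m.natAbs : ℤ) + e.natAbs) + (x + e * m).natAbs + 1 ≤ (n : ℤ) + j) :
    Dterm m e n j x = 0 := by
  unfold Dterm
  rw [coeffZ_neg (by have := gE_big m e x h; omega), mul_zero]

lemma inner_n (m e : ℤ) (n : ℕ) (K : ℕ) :
    ∑ p ∈ Finset.HasAntidiagonal.antidiagonal K, Scoeff m e n ((p.1 : ℤ) + T0 m e) * PowerSeries.coeff p.2 wSeries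
      = (-1) ^ n * ScU (qPochInv n) ((n : ℤ) + e + 1) ((K : ℤ) + (T0 m e - fE m e n)) := by
  have hs : T0 m e - fE m e n ≤ 0 := by have := T0_le_fE m e n; omega
  have hterm : ∀ p ∈ Finset.HasAntidiagonal.antidiagonal K,
      Scoeff m e n ((p.1 : ℤ) + T0 m e) * PowerSeries.coeff p.2 wSeries
        = (-1) ^ n * (coeffZ ((p.1 : ℤ) + (T0 m e - fE m e n))
            (qPochInv n * qPochInvZ ((n : ℤ) + e)) * PowerSeries.coeff p.2 wSeries) := by
    intro p _
    rw [Scoeff_eq]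
    have harg : (p.1 : ℤ) + T0 m e - fE m e n = (p.1 : ℤ) + (T0 m e - fE m e n) := by ring
    rw [harg]
    ring
  rw [Finset.sum_congr rfl hterm, ← Finset.mul_sum, Lconv _ _ _ _ hs]
  congr 1
  have hass : (qPochInv n * qPochInvZ ((n : ℤ) + e)) * wSeries
      = qPochInv n * (wSeries * qPochInvZ ((n : ℤ) + e)) := by ring
  rw [hass, LAfull]

def CB (m e : ℤ) (K : ℕ) : ℕ := 2 * (m.natAbs + e.natAbs) + (T0 m e + e * m).natAbs + K + 1

lemma ScU_eq_sum' (u : PowerSeries ℤ) (c k : ℤ) (B : ℕ)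
    (hvan : ∀ j, B ≤ j → (-1 : ℤ) ^ j * coeffZ (k - eulerE c j) (u * qPochInv j) = 0) :
    ScU u c k = ∑ j ∈ Finset.range B, (-1 : ℤ) ^ j * coeffZ (k - eulerE c j) (u * qPochInv j) :=
  finsum_nat_eq_sum _ B hvan

lemma GS (m e : ℤ) (K : ℕ) :
    PowerSeries.coeff K (PA m e * wSeries)
      = ∑ n ∈ Finset.range (CB m e K), ∑ j ∈ Finset.range (CB m e K),
          Dterm m e n j ((K : ℤ) + T0 m e) := by
  set C := CB m e K with hC
  have hCval : (C : ℤ) = 2 * ((m.natAbs : ℤ) + e.natAbs) + ((T0 m e + e * m).natAbs : ℤ) + K + 1 := by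
    rw [hC]; unfold CB; push_cast; ring
  rw [PowerSeries.coeff_mul]
  have hPA : ∀ p ∈ Finset.HasAntidiagonal.antidiagonal K,
      PowerSeries.coeff p.1 (PA m e) * PowerSeries.coeff p.2 wSeries
        = ∑ n ∈ Finset.range C, Scoeff m e n ((p.1 : ℤ) + T0 m e) * PowerSeries.coeff p.2 wSeries := by
    intro p hp
    have hp1 : p.1 ≤ K := by
      have := Finset.HasAntidiagonal.mem_antidiagonal.1 hp; omega
    have hble : 2 * m.natAbs + (((p.1 : ℤ) + T0 m e) + e * m).natAbs + 1 ≤ (C : ℤ) := by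
      have hp1' : (p.1 : ℤ) ≤ (K : ℤ) := by exact_mod_cast hp1
      omega
    rw [PA, PowerSeries.coeff_mk, Icoeff_eq_sum m e _ C hble, Finset.sum_mul]
  rw [Finset.sum_congr rfl hPA, Finset.sum_comm]
  apply Finset.sum_congr rfl
  intro n _
  rw [inner_n m e n K]
  have hvan : ∀ j, C ≤ j → (-1 : ℤ) ^ j * coeffZ (((K : ℤ) + (T0 m e - fE m e n)) - eulerE ((n : ℤ) + e + 1) j)
      (qPochInv n * qPochInv j) = 0 := by
    intro j hj
    have harg : (K : ℤ) + (T0 m e - fE m e n) - eulerE ((n : ℤ) + e + 1) j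
        = ((K : ℤ) + T0 m e) - gE m e n j := by
      have := fE_plus_eulerE m e n j; omega
    have hj' : (C : ℤ) ≤ (j : ℤ) := by exact_mod_cast hj
    have hn0 : (0 : ℤ) ≤ (n : ℤ) := by positivity
    have hbig : 2 * ((m.natAbs : ℤ) + e.natAbs) + ((((K : ℤ) + T0 m e) + e * m).natAbs : ℤ) + 1 ≤ (n : ℤ) + j := by
      omega
    rw [harg, coeffZ_neg (by have := gE_big m e ((K : ℤ) + T0 m e) hbig; omega), mul_zero]
  rw [ScU_eq_sum' _ _ _ C hvan, Finset.mul_sum]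
  apply Finset.sum_congr rfl
  intro j _
  unfold Dterm
  have harg : (K : ℤ) + (T0 m e - fE m e n) - eulerE ((n : ℤ) + e + 1) j
      = ((K : ℤ) + T0 m e) - gE m e n j := by
    have := fE_plus_eulerE m e n j; omega
  rw [harg, pow_add]
  ring

lemma T0_symm (m e : ℤ) : T0 (-e) (-m) = T0 m e := by unfold T0; ring

lemma CB_symm (m e : ℤ) (K : ℕ) : CB (-e) (-m) K = CB m e K := by
  unfold CB
  have h1 : T0 (-e) (-m) + (-m) * (-e) = T0 m e + e * m := by unfold T0; ring
  rw [h1]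
  omega

lemma Dterm_swap (m e : ℤ) (n j : ℕ) (x : ℤ) :
    Dterm (-e) (-m) j n x = Dterm m e n j x := by
  unfold Dterm
  have hg : gE (-e) (-m) j n = gE m e n j := by unfold gE; ring
  rw [hg, add_comm j n, mul_comm (qPochInv j) (qPochInv n)]

lemma PAW_symm (m e : ℤ) : PA m e * wSeries = PA (-e) (-m) * wSeries := by
  apply PowerSeries.ext; intro K
  rw [GS, GS, CB_symm, T0_symm]
  rw [Finset.sum_comm]
  apply Finset.sum_congr rfl; intro a _
  apply Finset.sum_congr rfl; intro b _
  exact (Dterm_swap m e b a _).symm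

lemma PA_symm (m e : ℤ) : PA m e = PA (-e) (-m) := by
  have h := PAW_symm m e
  calc PA m e = PA m e * (wSeries * wInv) := by rw [wSeries_mul_wInv, mul_one]
    _ = PA m e * wSeries * wInv := by ring
    _ = PA (-e) (-m) * wSeries * wInv := by rw [h]
    _ = PA (-e) (-m) * (wSeries * wInv) := by ring
    _ = PA (-e) (-m) := by rw [wSeries_mul_wInv, mul_one]

lemma Icoeff_symm (m e k : ℤ) : Icoeff m e k = Icoeff (-e) (-m) k := by
  by_cases hk : k < T0 m e
  · have hsq1 := sq_nonneg e
    have hsq2 := sq_nonneg m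
    unfold T0 at hk
    rw [Icoeff_vanish_low m e k (by linarith),
      Icoeff_vanish_low (-e) (-m) k (by nlinarith [sq_nonneg m])]
  · push_neg at hk
    have hi : ((k - T0 m e).toNat : ℤ) + T0 m e = k := by omega
    have h := congrArg (PowerSeries.coeff (k - T0 m e).toNat) (PA_symm m e)
    rw [PA, PA, PowerSeries.coeff_mk, PowerSeries.coeff_mk, T0_symm, hi] at h
    exact h

lemma fE_mono (m e : ℤ) {N n : ℕ} (hm : m ≤ (N : ℤ)) (h : N < n) : fE m e N < fE m e n := by
  unfold fE
  have h1 : (N : ℤ) < (n : ℤ) := by exact_mod_cast h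
  have h0 : (0 : ℤ) ≤ (N : ℤ) := by positivity
  nlinarith [mul_pos (show (0 : ℤ) < (n : ℤ) - N by omega)
    (show (0 : ℤ) < (n : ℤ) + N + 1 - 2 * m by omega)]

lemma coeffZ_zero_inv_mul (a b : ℕ) : coeffZ 0 (qPochInv a * qPochInv b) = 1 := by
  unfold coeffZ
  rw [if_pos le_rfl]
  have : (0 : ℤ).toNat = 0 := rfl
  rw [this, PowerSeries.coeff_zero_eq_constantCoeff, map_mul,
    constantCoeff_qPochInv, constantCoeff_qPochInv, mul_one]

lemma direct_case (m e : ℤ) (h : m ≤ 0 ∨ m + e ≤ 0) :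
    HasDegree m e (max m 0 * max (m + e) 0 + max (-m) 0 * max e 0 +
        max (-e) 0 * max (-e - m) 0 + max 0 (max m (-e))) := by
  set N : ℕ := (-e).toNat with hN
  have hNZ : (N : ℤ) = max (-e) 0 := by rw [hN]; exact Int.toNat_eq_max (-e)
  have hmN : m ≤ (N : ℤ) := by rw [hN]; rcases h with h | h <;> omega
  have hδ : max m 0 * max (m + e) 0 + max (-m) 0 * max e 0 +
      max (-e) 0 * max (-e - m) 0 + max 0 (max m (-e)) = fE m e N := by
    rcases le_or_gt 0 e with he | he
    · have hm : m ≤ 0 := by rcases h with h | h; exact h; omega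
      have hN0 : (N : ℤ) = 0 := by rw [hNZ, max_eq_right (by omega : -e ≤ 0)]
      rw [max_eq_right hm, max_eq_left (by omega : (0 : ℤ) ≤ -m),
        max_eq_left he, max_eq_right (by omega : -e ≤ 0)]
      have hlast : max 0 (max m (-e)) = 0 :=
        max_eq_left (max_le hm (by omega))
      rw [hlast]
      unfold fE
      rw [hN0]
      ring
    · have hme : m + e ≤ 0 := by rcases h with h | h; omega; exact h
      have hN0 : (N : ℤ) = -e := by rw [hNZ, max_eq_left (by omega : (0 : ℤ) ≤ -e)]
      rw [max_eq_right (by omega : m + e ≤ 0), max_eq_right (by omega : e ≤ 0),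
        max_eq_left (by omega : (0 : ℤ) ≤ -e), max_eq_left (by omega : (0 : ℤ) ≤ -e - m)]
      have hlast : max 0 (max m (-e)) = -e := by
        rw [max_eq_right (show m ≤ -e by omega), max_eq_right (show (0 : ℤ) ≤ -e by omega)]
      rw [hlast]
      unfold fE
      rw [hN0]
      ring
  rw [hδ]
  constructor
  · have hval : Icoeff m e (fE m e N) = Scoeff m e N (fE m e N) := by
      unfold Icoeff
      apply finsum_eq_single
      intro n hn
      rcases lt_or_gt_of_ne hn with hlt | hgt
      · unfold Scoeff
        rw [if_neg (by omega)]
      · exact Scoeff_vanish_low (fE_mono m e hmN hgt)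
    rw [hval]
    unfold Scoeff
    rw [if_pos (by omega)]
    have hz : fE m e N - ((N : ℤ) * ((N : ℤ) + 1) - (2 * (N : ℤ) + e) * m) = 0 := by
      unfold fE; ring
    rw [hz, coeffZ_zero_inv_mul, mul_one]
    simp
  · intro k hk
    apply finsum_eq_zero_of_forall_eq_zero
    intro n
    by_cases hne : 0 ≤ (n : ℤ) + e
    · have hnN : N ≤ n := by omega
      have hle : fE m e N ≤ fE m e n := by
        rcases eq_or_lt_of_le hnN with rfl | hlt
        · exact le_rfl
        · exact le_of_lt (fE_mono m e hmN hlt)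
      exact Scoeff_vanish_low (by omega)
    · unfold Scoeff
      rw [if_neg hne]


/-- The degree of the tetrahedron index is
`δ(m,e) = (1/2)(m₊(m+e)₊ + (-m)₊ e₊ + (-e)₊(-e-m)₊ + max{0,m,-e})`
in `q`-units, i.e. `2δ(m,e)` in `t = q^{1/2}`-units, where `x₊ = max{x,0}`. -/
theorem degree_IDelta (m e : ℤ) :
    HasDegree m e
      (max m 0 * max (m + e) 0 + max (-m) 0 * max e 0 +
        max (-e) 0 * max (-e - m) 0 + max 0 (max m (-e))) := by
  by_cases hC : 1 ≤ m ∧ 1 ≤ m + e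
  · have hd := direct_case (-e) (-m) (Or.inr (by omega))
    have hδ : max (-e) 0 * max (-e + -m) 0 + max (- -e) 0 * max (-m) 0 +
        max (- -m) 0 * max (- -m - -e) 0 + max 0 (max (-e) (- -m))
        = max m 0 * max (m + e) 0 + max (-m) 0 * max e 0 +
          max (-e) 0 * max (-e - m) 0 + max 0 (max m (-e)) := by
      rw [show (-e : ℤ) + -m = -e - m by ring, show (- -e : ℤ) = e by ring,
        show (- -m : ℤ) = m by ring, show (m : ℤ) - -e = m + e by ring,
        max_comm (-e) m]
      ring
    rw [hδ] at hd
    obtain ⟨hd1, hd2⟩ := hd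
    constructor
    · rw [Icoeff_symm m e]
      exact hd1
    · intro k hk
      rw [Icoeff_symm m e]
      exact hd2 k hk
  · exact direct_case m e (by omega)
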